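/- Let f be a nonerasing endomorphism of the free monoid over a finite alphabet A. A right-infinite word w over A can be indefinitely desubstituted by f (i.e., there exists a sequence (w_n) of infinite words with w_0 = w and w_n = f(w_{n+1}) for all n ≥ 0) if and only if w is a fixed point of f^n for some integer n ≥ 1. -/

import Mathlib

universe u
variable {A : Type u}

/-- Apply a substitution (given by images of letters) to a finite word. -/
def applyList (f : A → List A) (u : List A) : List A := u.flatMap f

/-- Starting position of the image of the `n`-th letter of `v` inside `f(v)`. -/
def blockStart (f : A → List A) (v : ℕ → A) : ℕ → ℕ
  | 0 => 0
  | n + 1 => blockStart f v n + (f (v n)).length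

/-- `ApplyEq f v u` means `u = f(v)` for right-infinite words. -/
def ApplyEq (f : A → List A) (v u : ℕ → A) : Prop :=
  ∀ (n i : ℕ) (h : i < (f (v n)).length),
    u (blockStart f v n + i) = (f (v n))[i]

/-- `u` occurs as a factor of `w` at position `k`. -/
def FactorAt (w : ℕ → A) (u : List A) (k : ℕ) : Prop :=
  ∀ (i : ℕ) (h : i < u.length), u[i] = w (k + i)

def Factor (w : ℕ → A) (u : List A) : Prop := ∃ k, FactorAt w u k

/-- `u` is a prefix of the infinite word `w`. -/
def PrefixOf (u : List A) (w : ℕ → A) : Prop :=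
  ∀ (i : ℕ) (h : i < u.length), u[i] = w i

/-- Membership in the stable set of a set `S` of substitutions. -/
def InStable (S : Set (A → List A)) (w : ℕ → A) : Prop :=
  ∃ (σ : ℕ → A → List A) (ws : ℕ → ℕ → A),
    (∀ n, σ n ∈ S) ∧ ws 0 = w ∧ ∀ n, ApplyEq (σ n) (ws (n + 1)) (ws n)

/-- Composition `σ_1 ∘ ⋯ ∘ σ_n` of the first `n` substitutions of `s` (0-indexed). -/
def compSeq (s : ℕ → A → List A) : ℕ → A → List A
  | 0 => fun a => [a]
  | n + 1 => fun a => applyList (compSeq s n) (s n a)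

/-- `w` is S-adic with directive sequence `σ`. -/
def SAdicWith (σ : ℕ → A → List A) (w : ℕ → A) : Prop :=
  ∃ a : ℕ → A, (∀ n, PrefixOf (compSeq σ n (a n)) w) ∧
    ∀ N : ℕ, ∃ n, N ≤ (compSeq σ n (a n)).length


namespace Aux

/-- prefix of an infinite word -/
def pre (v : ℕ → A) (n : ℕ) : List A := (List.range n).map v

@[simp] lemma pre_length (v : ℕ → A) (n : ℕ) : (pre v n).length = n := by simp [pre]

lemma pre_getElem (v : ℕ → A) (n i : ℕ) (h : i < (pre v n).length) : (pre v n)[i] = v i := by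
  simp [pre]

lemma pre_succ (v : ℕ → A) (n : ℕ) : pre v (n + 1) = pre v n ++ [v n] := by
  simp [pre, List.range_succ]

lemma mem_pre {v : ℕ → A} {n : ℕ} {a : A} (h : a ∈ pre v n) : ∃ i, i < n ∧ a = v i := by
  simp only [pre, List.mem_map, List.mem_range] at h
  obtain ⟨i, hi, rfl⟩ := h
  exact ⟨i, hi, rfl⟩

@[simp] lemma applyList_append (f : A → List A) (L M : List A) :
    applyList f (L ++ M) = applyList f L ++ applyList f M := by
  simp [applyList]

@[simp] lemma applyList_singleton (f : A → List A) (a : A) : applyList f [a] = f a := by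
  simp [applyList]

lemma applyList_congr {f g : A → List A} {L : List A} (h : ∀ a ∈ L, f a = g a) :
    applyList f L = applyList g L := by
  simp only [applyList]
  induction L with
  | nil => rfl
  | cons a L ih =>
      simp only [List.flatMap_cons]
      rw [h a (by simp), ih (fun b hb => h b (by simp [hb]))]

lemma blockStart_eq_length (f : A → List A) (v : ℕ → A) (n : ℕ) :
    blockStart f v n = (applyList f (pre v n)).length := by
  induction n with
  | zero => simp [blockStart, pre, applyList]
  | succ n ih => simp [blockStart, pre_succ, ih]

lemma blockStart_mono (f : A → List A) (v : ℕ → A) {m n : ℕ} (h : m ≤ n) :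
    blockStart f v m ≤ blockStart f v n := by
  induction n with
  | zero =>
      have hm : m = 0 := Nat.le_zero.mp h
      subst hm
      exact le_rfl
  | succ n ih =>
      rcases Nat.lt_or_ge m (n+1) with h' | h'
      · exact le_trans (ih (by omega)) (by simp [blockStart])
      · have : m = n + 1 := by omega
        subst this; rfl

lemma length_le_applyList {f : A → List A} (hf : ∀ a, f a ≠ []) (L : List A) :
    L.length ≤ (applyList f L).length := by
  induction L with
  | nil => simp [applyList]
  | cons a L ih =>
      have h1 : applyList f (a :: L) = f a ++ applyList f L := by simp [applyList]
      rw [h1, List.length_append, List.length_cons]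
      have h2 : 1 ≤ (f a).length := List.length_pos_iff.2 (hf a)
      omega

lemma le_blockStart {f : A → List A} (hf : ∀ a, f a ≠ []) (v : ℕ → A) (n : ℕ) :
    n ≤ blockStart f v n := by
  rw [blockStart_eq_length]
  have := length_le_applyList hf (pre v n)
  simpa using this

lemma cover {f : A → List A} (v : ℕ → A) :
    ∀ n i, i < blockStart f v n →
      ∃ j t, j < n ∧ ∃ ht : t < (f (v j)).length, i = blockStart f v j + t := by
  intro n
  induction n with
  | zero => intro i hi; simp [blockStart] at hi
  | succ n ih =>
      intro i hi
      rcases Nat.lt_or_ge i (blockStart f v n) with h' | h'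
      · obtain ⟨j, t, hj, ht, hit⟩ := ih i h'
        exact ⟨j, t, by omega, ht, hit⟩
      · refine ⟨n, i - blockStart f v n, by omega, ?_, by omega⟩
        simp only [blockStart] at hi
        omega

lemma cover_all {f : A → List A} (hf : ∀ a, f a ≠ []) (v : ℕ → A) (i : ℕ) :
    ∃ j t, ∃ ht : t < (f (v j)).length, i = blockStart f v j + t := by
  obtain ⟨j, t, _, ht, hit⟩ := cover v (i+1) i (lt_of_lt_of_le (Nat.lt_succ_self i) (le_blockStart hf v (i+1)))
  exact ⟨j, t, ht, hit⟩

lemma applyEq_unique {f : A → List A} (hf : ∀ a, f a ≠ []) {v u u' : ℕ → A}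
    (h : ApplyEq f v u) (h' : ApplyEq f v u') : u = u' := by
  funext i
  obtain ⟨j, t, ht, rfl⟩ := cover_all hf v i
  rw [h j t ht, h' j t ht]

lemma prefixOf_pre (v : ℕ → A) (n : ℕ) : PrefixOf (pre v n) v := by
  intro i h; rw [pre_getElem]

lemma prefixOf_eq_pre {L : List A} {v : ℕ → A} (h : PrefixOf L v) : L = pre v L.length := by
  apply List.ext_getElem (by simp)
  intro i h1 h2
  rw [h i h1, pre_getElem]

lemma applyList_pre_succ (g : A → List A) (v : ℕ → A) (n : ℕ) :
    applyList g (pre v (n+1)) = applyList g (pre v n) ++ g (v n) := by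
  rw [pre_succ, applyList_append, applyList_singleton]

lemma applyEq_iff_prefix {g : A → List A} {v u : ℕ → A} :
    ApplyEq g v u ↔ ∀ n, PrefixOf (applyList g (pre v n)) u := by
  constructor
  · intro h n
    induction n with
    | zero => intro i hi; simp [pre, applyList] at hi
    | succ n ih =>
        rw [applyList_pre_succ]
        intro i hi
        have hL : (applyList g (pre v n)).length = blockStart g v n :=
          (blockStart_eq_length g v n).symm
        rcases Nat.lt_or_ge i (applyList g (pre v n)).length with h' | h'
        · rw [List.getElem_append_left h']
          exact ih i h'
        · have hilen := hi
          rw [List.length_append] at hilen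
          have htlt : i - (applyList g (pre v n)).length < (g (v n)).length := by omega
          rw [List.getElem_append_right h']
          have h3 := h n (i - (applyList g (pre v n)).length) htlt
          have hieq : blockStart g v n + (i - (applyList g (pre v n)).length) = i := by omega
          rw [hieq] at h3
          exact h3.symm
  · intro h n i hi
    have hp := h (n+1)
    rw [applyList_pre_succ] at hp
    have hL : (applyList g (pre v n)).length = blockStart g v n :=
      (blockStart_eq_length g v n).symm
    have hlen : blockStart g v n + i < (applyList g (pre v n) ++ g (v n)).length := by
      rw [List.length_append, hL]; omega
    have h2 := hp (blockStart g v n + i) hlen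
    rw [List.getElem_append_right (by omega : (applyList g (pre v n)).length ≤ blockStart g v n + i)] at h2
    have hieq : blockStart g v n + i - (applyList g (pre v n)).length = i := by omega
    simp only [hieq] at h2
    exact h2.symm

lemma prefix_transport {g : A → List A} {v u : ℕ → A} {L : List A}
    (h : ApplyEq g v u) (hL : PrefixOf L v) : PrefixOf (applyList g L) u := by
  rw [prefixOf_eq_pre hL]
  exact applyEq_iff_prefix.1 h L.length

lemma applyEq_comp {g h : A → List A} {v t u : ℕ → A}
    (h1 : ApplyEq g v t) (h2 : ApplyEq h t u) :
    ApplyEq (fun a => applyList h (g a)) v u := by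
  rw [applyEq_iff_prefix]
  intro n
  have he : applyList (fun a => applyList h (g a)) (pre v n)
      = applyList h (applyList g (pre v n)) := by
    simp [applyList, List.flatMap_assoc]
  rw [he]
  exact prefix_transport h2 (applyEq_iff_prefix.1 h1 n)

lemma applyEq_congr {g g' : A → List A} {v u : ℕ → A}
    (h : ApplyEq g v u) (hgg : ∀ i, g (v i) = g' (v i)) : ApplyEq g' v u := by
  rw [applyEq_iff_prefix] at h ⊢
  intro n
  have : applyList g' (pre v n) = applyList g (pre v n) := by
    apply applyList_congr
    intro a ha
    obtain ⟨i, _, rfl⟩ := mem_pre ha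
    exact (hgg i).symm
  rw [this]
  exact h n


section Power
variable (f : A → List A)

/-- `F f n = f^n` as a substitution. -/
abbrev F (n : ℕ) : A → List A := compSeq (fun _ => f) n

@[simp] lemma F_zero (a : A) : F f 0 a = [a] := rfl

lemma F_succ (n : ℕ) (a : A) : F f (n+1) a = applyList (F f n) (f a) := rfl

@[simp] lemma applyList_F_zero (L : List A) : applyList (F f 0) L = L := by
  rw [applyList_congr (fun a _ => F_zero f a)]
  simp [applyList]

lemma compSeq_add (m n : ℕ) (a : A) : F f (m + n) a = applyList (F f m) (F f n a) := by
  induction n generalizing a with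
  | zero => simp
  | succ n ih =>
      have h1 : m + (n + 1) = (m + n) + 1 := by omega
      rw [h1, F_succ, F_succ]
      rw [applyList_congr (fun b _ => ih b)]
      simp only [applyList, List.flatMap_assoc]

lemma applyList_compSeq_add (m n : ℕ) (L : List A) :
    applyList (F f (m + n)) L = applyList (F f m) (applyList (F f n) L) := by
  rw [applyList_congr (fun a _ => compSeq_add f m n a)]
  simp only [applyList, List.flatMap_assoc]

lemma F_one (a : A) : F f 1 a = f a := by
  rw [F_succ]; simp

lemma F_comm (n : ℕ) (a : A) : applyList f (F f n a) = applyList (F f n) (f a) := by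
  have h1 : applyList f (F f n a) = applyList (F f 1) (F f n a) := by
    apply applyList_congr
    intro b _
    exact (F_one f b).symm
  rw [h1, ← compSeq_add]
  have : 1 + n = n + 1 := by omega
  rw [this, F_succ]

lemma F_ne (hf : ∀ a, f a ≠ []) : ∀ n a, F f n a ≠ [] := by
  intro n
  induction n with
  | zero => intro a; simp
  | succ n ih =>
      intro a
      rw [F_succ]
      obtain ⟨b, L, hbL⟩ : ∃ b L, f a = b :: L := by
        rcases hL : f a with _ | ⟨b, L⟩
        · exact absurd hL (hf a)
        · exact ⟨b, L, rfl⟩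
      rw [hbL]
      simp only [applyList, List.flatMap_cons]
      intro hcon
      exact ih b (List.append_eq_nil_iff.mp hcon).1

end Power

section App
variable (f : A → List A)

/-- canonical application of a substitution to an infinite word -/
def appW (v : ℕ → A) : ℕ → A := fun i => (applyList f (pre v (i+1))).getD i (v 0)

lemma getElem_congr_list {L L' : List A} (h : L = L') {i : ℕ} (hi : i < L.length) :
    L[i] = L'[i]'(by rw [← h]; exact hi) := by subst h; rfl

lemma getElem_applyList_pre {g : A → List A} (v : ℕ → A) {n m i : ℕ} (hm : n + 1 ≤ m)
    (hi : i < (g (v n)).length) (hlt : blockStart g v n + i < (applyList g (pre v m)).length) :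
    (applyList g (pre v m))[blockStart g v n + i] = (g (v n))[i] := by
  induction m with
  | zero => omega
  | succ m ih =>
      rcases Nat.lt_or_ge n m with h' | h'
      · have hlt' : blockStart g v n + i < (applyList g (pre v m)).length := by
          rw [← blockStart_eq_length]
          have h2 : blockStart g v (n+1) ≤ blockStart g v m := blockStart_mono g v (by omega)
          simp only [blockStart] at h2
          omega
        rw [getElem_congr_list (applyList_pre_succ g v m) hlt]
        rw [List.getElem_append_left hlt']
        exact ih (by omega) hlt'
      · have hn : n = m := by omega
        subst hn
        rw [getElem_congr_list (applyList_pre_succ g v n) hlt]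
        rw [List.getElem_append_right (by rw [← blockStart_eq_length]; omega)]
        congr 1
        rw [← blockStart_eq_length]
        omega

lemma applyEq_appW (hf : ∀ a, f a ≠ []) (v : ℕ → A) : ApplyEq f v (appW f v) := by
  intro n i hi
  have hbn : n ≤ blockStart f v n := le_blockStart hf v n
  have hlt : blockStart f v n + i < (applyList f (pre v (blockStart f v n + i + 1))).length := by
    rw [← blockStart_eq_length]
    have h2 : blockStart f v (n+1) ≤ blockStart f v (blockStart f v n + i + 1) :=
      blockStart_mono f v (by omega)
    simp only [blockStart] at h2 ⊢
    have := le_blockStart hf v (blockStart f v n + i + 1)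
    omega
  show (applyList f (pre v (blockStart f v n + i + 1))).getD (blockStart f v n + i) (v 0) = _
  rw [List.getD_eq_getElem _ _ hlt]
  exact getElem_applyList_pre v (by omega) hi hlt

lemma applyEq_id (v : ℕ → A) : ApplyEq (F f 0) v v := by
  intro n i hi
  simp only [F_zero, List.length_cons, List.length_nil] at hi
  have hi0 : i = 0 := by omega
  subst hi0
  have hbs : ∀ k, blockStart (F f 0) v k = k := by
    intro k
    induction k with
    | zero => rfl
    | succ k ih => simp [blockStart, ih]
  rw [hbs]
  simp

/-- canonical n-fold application -/
def appn (n : ℕ) (v : ℕ → A) : ℕ → A := (appW f)^[n] v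

@[simp] lemma appn_zero (v : ℕ → A) : appn f 0 v = v := rfl

lemma appn_add (m n : ℕ) (v : ℕ → A) : appn f (m + n) v = appn f m (appn f n v) :=
  Function.iterate_add_apply _ m n v

lemma applyEq_appn (hf : ∀ a, f a ≠ []) (n : ℕ) (v : ℕ → A) :
    ApplyEq (F f n) v (appn f n v) := by
  induction n with
  | zero => exact applyEq_id f v
  | succ n ih =>
      have h2 : ApplyEq f (appn f n v) (appn f (n+1) v) := by
        have : appn f (n+1) v = appW f (appn f n v) := Function.iterate_succ_apply' _ n v
        rw [this]
        exact applyEq_appW f hf _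
      have h3 := applyEq_comp ih h2
      apply applyEq_congr h3
      intro i
      exact F_comm f n (v i)

lemma applyEq_F_iff (hf : ∀ a, f a ≠ []) {n : ℕ} {v u : ℕ → A} :
    ApplyEq (F f n) v u ↔ u = appn f n v := by
  constructor
  · intro h
    exact applyEq_unique (F_ne f hf n) h (applyEq_appn f hf n v)
  · rintro rfl
    exact applyEq_appn f hf n v

end App


section Bounded
variable (f : A → List A)

/-- `a` has bounded images under all powers of `f`. -/
def Bdd (a : A) : Prop := ∃ C, ∀ k, (F f k a).length ≤ C

lemma F_len_mono (hf : ∀ a, f a ≠ []) {a : A} {k k' : ℕ} (h : k ≤ k') :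
    (F f k a).length ≤ (F f k' a).length := by
  induction k' with
  | zero =>
      have : k = 0 := by omega
      subst this; exact le_rfl
  | succ k' ih =>
      rcases Nat.lt_or_ge k (k'+1) with h' | h'
      · have h1 : F f (k'+1) a = applyList f (F f k' a) := by
          rw [F_succ, ← F_comm]
        have h2 := length_le_applyList hf (F f k' a)
        rw [h1]
        exact le_trans (ih (by omega)) h2
      · have : k = k' + 1 := by omega
        subst this; exact le_rfl

lemma mem_length_le_applyList {g : A → List A} (L : List A) {a : A} (ha : a ∈ L) :
    (g a).length ≤ (applyList g L).length := by
  rw [applyList, List.length_flatMap]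
  exact List.single_le_sum (fun x _ => Nat.zero_le x) _
    (List.mem_map_of_mem (f := List.length ∘ g) ha)

lemma applyList_length_le {g : A → List A} {L : List A} {M : ℕ}
    (h : ∀ d ∈ L, (g d).length ≤ M) : (applyList g L).length ≤ L.length * M := by
  induction L with
  | nil => simp [applyList]
  | cons a L ih =>
      have h1 : applyList g (a :: L) = g a ++ applyList g L := by simp [applyList]
      rw [h1, List.length_append, List.length_cons]
      have h2 := ih (fun d hd => h d (by simp [hd]))
      have h3 := h a (by simp)
      have : (L.length + 1) * M = L.length * M + M := by ring
      omega

lemma bdd_of_mem_f {b d : A} (hb : Bdd f b) (hd : d ∈ f b) : Bdd f d := by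
  obtain ⟨C, hC⟩ := hb
  refine ⟨C, fun k => ?_⟩
  have h1 : (F f k d).length ≤ (applyList (F f k) (f b)).length :=
    mem_length_le_applyList _ hd
  rw [← F_succ] at h1
  exact le_trans h1 (hC (k+1))

lemma bdd_of_mem_F : ∀ (p : ℕ) {b d : A}, Bdd f b → d ∈ F f p b → Bdd f d := by
  intro p
  induction p with
  | zero =>
      intro b d hb hd
      simp only [F_zero, List.mem_singleton] at hd
      subst hd; exact hb
  | succ p ih =>
      intro b d hb hd
      rw [F_succ] at hd
      simp only [applyList, List.mem_flatMap] at hd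
      obtain ⟨c, hc, hdc⟩ := hd
      exact ih (bdd_of_mem_f f hb hc) hdc

lemma exists_uniform_bound [Fintype A] :
    ∃ M, ∀ a, Bdd f a → ∀ k, (F f k a).length ≤ M := by
  classical
  refine ⟨Finset.univ.sup (fun a => if h : Bdd f a then h.choose else 0), ?_⟩
  intro a ha k
  have h1 := ha.choose_spec k
  have h2 : (if h : Bdd f a then h.choose else 0) = ha.choose := dif_pos ha
  calc (F f k a).length ≤ ha.choose := h1
    _ = (if h : Bdd f a then h.choose else 0) := h2.symm
    _ ≤ _ := Finset.le_sup (f := fun a => if h : Bdd f a then h.choose else 0)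
        (Finset.mem_univ a)

lemma exists_agree [Fintype A] :
    ∃ k l, k < l ∧ ∀ a, Bdd f a → F f k a = F f l a := by
  classical
  obtain ⟨M, hM⟩ := exists_uniform_bound f
  let enc : ℕ → (A → Fin (M+1) → Option A) :=
    fun k a i => if Bdd f a then (F f k a)[(i : ℕ)]? else none
  obtain ⟨k, l, hkl, he⟩ := Finite.exists_ne_map_eq_of_infinite enc
  have main : ∀ k l : ℕ, enc k = enc l → ∀ a, Bdd f a → F f k a = F f l a := by
    intro k l he a ha
    apply List.ext_getElem?
    intro n
    rcases Nat.lt_or_ge n (M+1) with hn | hn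
    · have h1 := congrFun (congrFun he a) ⟨n, hn⟩
      simp only [enc, if_pos ha] at h1
      exact h1
    · rw [List.getElem?_eq_none (le_trans (hM a ha k) (by omega)),
        List.getElem?_eq_none (le_trans (hM a ha l) (by omega))]
  rcases Nat.lt_or_ge k l with h | h
  · exact ⟨k, l, h, main k l he⟩
  · have hlk : l < k := by omega
    exact ⟨l, k, hlk, main l k he.symm⟩

lemma F_stable {k l : ℕ} (hkl : k < l) (hag : ∀ a, Bdd f a → F f k a = F f l a) :
    ∀ (j : ℕ) (a : A), Bdd f a → F f (k + j * (l - k)) a = F f k a := by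
  intro j
  induction j with
  | zero => intro a _; simp
  | succ j ih =>
      intro a ha
      have h1 : k + (j+1) * (l - k) = (k + j * (l - k)) + (l - k) := by ring
      rw [h1, compSeq_add]
      rw [applyList_congr (fun d hd => ih d (bdd_of_mem_F f (l - k) ha hd))]
      rw [← compSeq_add]
      rw [show k + (l - k) = l by omega]
      exact (hag a ha).symm

lemma letters_mem {v u : ℕ → A} (h : ApplyEq f v u) {n : ℕ} {d : A}
    (hd : d ∈ f (v n)) : ∃ i, d = u i := by
  obtain ⟨t, ht, rfl⟩ := List.mem_iff_getElem.mp hd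
  exact ⟨blockStart f v n + t, (h n t ht).symm⟩

end Bounded

section MainCases
variable (f : A → List A)

lemma ws_chain {ws : ℕ → ℕ → A} (hws : ∀ n, ApplyEq f (ws (n+1)) (ws n)) :
    ∀ m j, ApplyEq (F f j) (ws (m + j)) (ws m) := by
  intro m j
  induction j with
  | zero => exact applyEq_id f _
  | succ j ih =>
      have h1 : ApplyEq f (ws (m + j + 1)) (ws (m + j)) := hws _
      have h2 := applyEq_comp h1 ih
      exact h2

lemma case1 [Fintype A] (hf : ∀ a, f a ≠ []) {ws : ℕ → ℕ → A}
    (hws : ∀ n, ApplyEq f (ws (n+1)) (ws n)) {m : ℕ} (hm : ∀ i, Bdd f (ws m i)) :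
    ∃ n, 1 ≤ n ∧ ApplyEq (F f n) (ws 0) (ws 0) := by
  obtain ⟨M, hM⟩ := exists_uniform_bound f
  have hall : ∀ j i, Bdd f (ws (m + j) i) := by
    intro j
    induction j with
    | zero => exact hm
    | succ j ih =>
        intro i
        have hmem : ∀ d ∈ f (ws (m + j + 1) i), Bdd f d := by
          intro d hd
          obtain ⟨i2, hi2⟩ := letters_mem f (hws (m+j)) hd
          rw [hi2]
          exact ih i2
        refine ⟨max 1 ((f (ws (m + j + 1) i)).length * M), ?_⟩
        intro k
        cases k with
        | zero => simp
        | succ k =>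
            rw [F_succ]
            have h1 := applyList_length_le (fun d hd => hM d (hmem d hd) k)
            exact le_trans h1 (le_max_right _ _)
  obtain ⟨k, l, hkl, hag⟩ := exists_agree f
  set p := l - k with hp
  have hp1 : 1 ≤ p := by omega
  have hchain : ∀ j, ws m = appn f j (ws (m + j)) :=
    fun j => (applyEq_F_iff f hf).1 (ws_chain f hws m j)
  set X := ws (m + (k + p)) with hX
  have hXb : ∀ i, Bdd f (X i) := hall (k + p)
  have e1 : appn f p (ws m) = appn f (k + 2*p) X := by
    rw [hchain (k+p), ← appn_add, show p + (k + p) = k + 2*p by ring]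
  have e2 : appn f (k + 2*p) X = appn f (k + p) X := by
    have hA := applyEq_appn f hf (k + 2*p) X
    have hB : ApplyEq (F f (k + p)) X (appn f (k + 2*p) X) := by
      apply applyEq_congr hA
      intro i
      have h2 := F_stable f hkl hag 2 (X i) (hXb i)
      have h1 := F_stable f hkl hag 1 (X i) (hXb i)
      rw [show k + 2 * (l - k) = k + 2*p by rw [hp]] at h2
      rw [show k + 1 * (l - k) = k + p by rw [hp]; ring] at h1
      rw [h2, h1]
    exact applyEq_unique (F_ne f hf (k+p)) hB (applyEq_appn f hf (k+p) X)
  have e3 : appn f p (ws m) = ws m := by rw [e1, e2, ← hchain (k+p)]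
  have hw : ws 0 = appn f m (ws m) := by
    have h0 := ws_chain f hws 0 m
    rw [Nat.zero_add] at h0
    exact (applyEq_F_iff f hf).1 h0
  have hfinal : appn f p (ws 0) = ws 0 := by
    rw [hw, ← appn_add, show p + m = m + p by ring, appn_add, e3]
  exact ⟨p, hp1, (applyEq_F_iff f hf).2 hfinal.symm⟩

lemma case2 [Fintype A] (hf : ∀ a, f a ≠ []) {ws : ℕ → ℕ → A}
    (hws : ∀ n, ApplyEq f (ws (n+1)) (ws n)) (h2 : ∀ m, ∃ i, ¬ Bdd f (ws m i)) :
    ∃ n, 1 ≤ n ∧ ApplyEq (F f n) (ws 0) (ws 0) := by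
  classical
  let pos : ℕ → ℕ := fun m => Nat.find (h2 m)
  have hpos_spec : ∀ m, ¬ Bdd f (ws m (pos m)) := fun m => Nat.find_spec (h2 m)
  have hpos_min : ∀ m i, i < pos m → Bdd f (ws m i) :=
    fun m i hi => not_not.mp (Nat.find_min (h2 m) hi)
  have hmono : ∀ m, pos (m+1) ≤ pos m := by
    intro m
    by_contra hcon
    push_neg at hcon
    apply hpos_spec m
    have hi : pos m < blockStart f (ws (m+1)) (pos (m+1)) :=
      lt_of_lt_of_le hcon (le_blockStart hf _ _)
    obtain ⟨j, t, hj, ht, heq⟩ := cover (ws (m+1)) (pos (m+1)) (pos m) hi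
    have hv : ws m (pos m) = (f (ws (m+1) j))[t] := by
      rw [heq]; exact (hws m) j t ht
    rw [hv]
    exact bdd_of_mem_f f (hpos_min (m+1) j hj) (List.getElem_mem ht)
  have hpos0 : ∀ m, pos m ≤ pos 0 := by
    intro m
    induction m with
    | zero => exact le_rfl
    | succ m ih => exact le_trans (hmono m) ih
  set ℓ := pos 0 + 1 with hℓ
  set Φ : List A → List A := fun L => (applyList f L).take ℓ with hΦ
  set st : ℕ → List A := fun m => pre (ws m) ℓ with hst
  have htrans : ∀ m, st m = Φ (st (m+1)) := by
    intro m
    apply List.ext_getElem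
    · simp only [hst, hΦ, pre_length, List.length_take]
      have hle : ℓ ≤ (applyList f (pre (ws (m+1)) ℓ)).length := by
        rw [← blockStart_eq_length]
        exact le_trans (by simp) (le_blockStart hf (ws (m+1)) ℓ)
      omega
    · intro i h1 h2'
      simp only [hst, hΦ] at h1 h2' ⊢
      rw [pre_getElem, List.getElem_take]
      have hilt : i < (applyList f (pre (ws (m+1)) ℓ)).length := by
        simp only [List.length_take] at h2'
        omega
      exact ((applyEq_iff_prefix.1 (hws m) ℓ) i hilt).symm
  have hΦiter : ∀ m q, st m = Φ^[q] (st (m + q)) := by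
    intro m q
    induction q with
    | zero => simp
    | succ q ih =>
        rw [show m + (q+1) = (m + q) + 1 by omega, Function.iterate_succ_apply,
          ← htrans (m+q)]
        exact ih
  obtain ⟨b, hbinf⟩ := Finite.exists_infinite_fiber (fun m => fun i : Fin ℓ => ws m (i : ℕ))
  have hT : {m : ℕ | (fun i : Fin ℓ => ws m (i : ℕ)) = b}.Infinite := by
    rw [← Set.infinite_coe_iff]
    exact hbinf
  have hsT : ∀ m ∈ {m : ℕ | (fun i : Fin ℓ => ws m (i : ℕ)) = b},
      ∀ m' ∈ {m : ℕ | (fun i : Fin ℓ => ws m (i : ℕ)) = b}, st m = st m' := by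
    intro m hm m' hm'
    simp only [Set.mem_setOf_eq] at hm hm'
    apply List.ext_getElem (by simp [hst])
    intro i hi1 hi2
    simp only [hst, pre_length] at hi1 hi2
    simp only [hst]
    rw [pre_getElem, pre_getElem]
    have e1 := congrFun hm ⟨i, hi1⟩
    have e2 := congrFun hm' ⟨i, hi2⟩
    simp only at e1 e2
    rw [e1, e2]
  obtain ⟨m₁, hm₁T, _⟩ := hT.exists_gt 0
  obtain ⟨m₂, hm₂T, h12⟩ := hT.exists_gt m₁
  set L := st m₁ with hLdef
  have hLm : ∀ m ∈ {m : ℕ | (fun i : Fin ℓ => ws m (i : ℕ)) = b}, st m = L :=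
    fun m hm => hsT m hm m₁ hm₁T
  set d := m₂ - m₁ with hd
  have hd1 : 1 ≤ d := by omega
  have hLd : Φ^[d] L = L := by
    have h1 := hΦiter m₁ d
    rw [show m₁ + d = m₂ by omega, hLm m₂ hm₂T] at h1
    exact h1.symm
  have hLkd : ∀ k, Φ^[k * d] L = L := by
    intro k
    induction k with
    | zero => simp
    | succ k ih =>
        rw [show (k+1) * d = k*d + d by ring, Function.iterate_add_apply, hLd, ih]
  have hkey : ∀ k, st (m₁ + k * d) = L := by
    intro k
    obtain ⟨m', hmT, hmgt⟩ := hT.exists_gt (m₁ + k * d)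
    have h1 := hΦiter (m₁ + k*d) (m' - (m₁ + k*d))
    rw [show m₁ + k*d + (m' - (m₁ + k*d)) = m' by omega, hLm m' hmT] at h1
    have hL2 := hΦiter m₁ (m' - m₁)
    rw [show m₁ + (m' - m₁) = m' by omega, hLm m' hmT] at hL2
    rw [show m' - m₁ = (m' - (m₁ + k*d)) + k*d by omega,
      Function.iterate_add_apply, hLkd k] at hL2
    rw [h1, ← hL2]
  set c := ws m₁ (pos m₁) with hc
  have hcn : ¬ Bdd f c := hpos_spec m₁
  have hcL : c ∈ L := by
    have hlt : pos m₁ < ℓ := by have := hpos0 m₁; omega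
    simp only [hLdef, hst, pre, List.mem_map, List.mem_range]
    exact ⟨pos m₁, hlt, rfl⟩
  have haPre : ∀ k, PrefixOf (applyList (F f (k * d)) L) (ws m₁) := by
    intro k
    have hA := ws_chain f hws m₁ (k*d)
    have hB : PrefixOf L (ws (m₁ + k*d)) := by
      rw [← hkey k]
      exact prefixOf_pre _ _
    exact prefix_transport hA hB
  have hub : ∀ C, ∃ k, C < (applyList (F f (k * d)) L).length := by
    intro C
    have hex : ∃ j, C < (F f j c).length := by
      by_contra hcon
      push_neg at hcon
      exact hcn ⟨C, hcon⟩
    obtain ⟨j, hj⟩ := hex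
    refine ⟨j, ?_⟩
    have h1 : (F f j c).length ≤ (F f (j * d) c).length :=
      F_len_mono f hf (Nat.le_mul_of_pos_right j hd1)
    have hmm := mem_length_le_applyList (g := F f (j*d)) L hcL
    omega
  have happ : appn f d (ws m₁) = ws m₁ := by
    funext i
    obtain ⟨k, hk⟩ := hub i
    have hpre1 := haPre k
    have hpre2 : PrefixOf (applyList (F f d) (applyList (F f (k*d)) L)) (appn f d (ws m₁)) :=
      prefix_transport (applyEq_appn f hf d (ws m₁)) hpre1
    rw [← applyList_compSeq_add] at hpre2
    have hle : (applyList (F f (k*d)) L).length ≤ (applyList (F f (d + k*d)) L).length := by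
      rw [applyList_compSeq_add]
      exact length_le_applyList (F_ne f hf d) _
    have hpre3 : PrefixOf (applyList (F f (d + k*d)) L) (ws m₁) := by
      have h3 := haPre (k+1)
      rw [show (k+1)*d = d + k*d by ring] at h3
      exact h3
    have hilt : i < (applyList (F f (d + k*d)) L).length := by omega
    exact (hpre2 i hilt).symm.trans (hpre3 i hilt)
  have hw : ws 0 = appn f m₁ (ws m₁) := by
    have h0 := ws_chain f hws 0 m₁
    rw [Nat.zero_add] at h0
    exact (applyEq_F_iff f hf).1 h0
  have hfinal : appn f d (ws 0) = ws 0 := by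
    rw [hw, ← appn_add, show d + m₁ = m₁ + d by ring, appn_add, happ]
  exact ⟨d, hd1, (applyEq_F_iff f hf).2 hfinal.symm⟩

end MainCases

end Aux


/-- an infinite word can be indefinitely desubstituted by a nonerasing
endomorphism `f` iff it is a fixed point of `f^n` for some `n ≥ 1`. -/
theorem stmt0 {A : Type u} [Fintype A] (f : A → List A) (hf : ∀ a, f a ≠ [])
    (w : ℕ → A) :
    (∃ ws : ℕ → ℕ → A, ws 0 = w ∧ ∀ n, ApplyEq f (ws (n + 1)) (ws n)) ↔
      ∃ n : ℕ, 1 ≤ n ∧ ApplyEq (compSeq (fun _ => f) n) w w := by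
  constructor
  · rintro ⟨ws, hws0, hws⟩
    by_cases hcase : ∃ m, ∀ i, Aux.Bdd f (ws m i)
    · obtain ⟨m, hm⟩ := hcase
      obtain ⟨n, hn, hA⟩ := Aux.case1 f hf hws hm
      exact ⟨n, hn, hws0 ▸ hA⟩
    · push_neg at hcase
      obtain ⟨n, hn, hA⟩ := Aux.case2 f hf hws hcase
      exact ⟨n, hn, hws0 ▸ hA⟩
  · rintro ⟨n, hn, hA⟩
    obtain ⟨p, rfl⟩ : ∃ p, n = p + 1 := ⟨n - 1, by omega⟩
    have hw : Aux.appn f (p+1) w = w := ((Aux.applyEq_F_iff f hf).1 hA).symm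
    refine ⟨fun k => Aux.appn f (p * k) w, by simp, ?_⟩
    intro k
    have h1 : Aux.appn f (p * k) w = Aux.appW f (Aux.appn f (p * (k+1)) w) := by
      have h2 : Aux.appW f (Aux.appn f (p*(k+1)) w) = Aux.appn f (p*(k+1) + 1) w :=
        (Function.iterate_succ_apply' (Aux.appW f) _ w).symm
      rw [h2, show p*(k+1) + 1 = (p*k) + (p+1) by ring, Aux.appn_add, hw]
    show ApplyEq f (Aux.appn f (p * (k+1)) w) (Aux.appn f (p * k) w)
    rw [h1]
    exact Aux.applyEq_appW f hf _
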